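/- arXiv:2509.20749 — 4 statements merged into one kernel-verified Lean document; each statement's English description precedes it below -/
import Mathlib

section
/- Let M be the real symmetric block matrix M = [[L', Aφ, AS], [Aφ, L', AS], [ASᵀ, ASᵀ, LS]] of size 2n+m, and let M̃₊ = [[L' + Aφ, √2·AS], [√2·ASᵀ, LS]] and M₋ = L' − Aφ. Then the characteristic polynomial of M equals the product of the characteristic polynomials of M̃₊ and M₋. -/
open Matrix Polynomial

lemma charpoly_conj_aux {k : Type*} [Fintype k] [DecidableEq k]
    (P Q M : Matrix k k ℝ) (h1 : P * Q = 1) (h2 : Q * P = 1) :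
    (P * M * Q).charpoly = M.charpoly := by
  have hscal : Matrix.scalar k (X : ℝ[X]) = (X : ℝ[X]) • (1 : Matrix k k ℝ[X]) := by
    ext i j
    by_cases h : i = j <;> simp [Matrix.scalar, Matrix.one_apply, diagonal, h]
  have key : charmatrix (P * M * Q) =
      (P.map C) * charmatrix M * (Q.map C) := by
    simp only [charmatrix, RingHom.mapMatrix_apply]
    rw [mul_sub, sub_mul, hscal]
    congr 1
    · rw [Matrix.mul_smul, Matrix.smul_mul, Matrix.mul_one, ← Matrix.map_mul, h1,
        Matrix.map_one _ (map_zero C) (map_one C)]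
    · simp [← Matrix.map_mul, Matrix.mul_assoc]
  unfold Matrix.charpoly
  rw [key, det_mul, det_mul, mul_comm, ← mul_assoc, ← det_mul, ← Matrix.map_mul, h2,
    Matrix.map_one _ (map_zero C) (map_one C), det_one, one_mul]

/-- The characteristic polynomial of the block matrix
`M = [[L', Aφ, AS], [Aφ, L', AS], [ASᵀ, ASᵀ, LS]]` factors as the product of the
characteristic polynomials of `M̃₊ = [[L' + Aφ, √2·AS], [√2·ASᵀ, LS]]`
and `M₋ = L' − Aφ`. -/
theorem stmt4 (n m : ℕ) (L' Aφ : Matrix (Fin n) (Fin n) ℝ)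
    (AS : Matrix (Fin n) (Fin m) ℝ) (LS : Matrix (Fin m) (Fin m) ℝ)
    (hL' : L'.IsSymm) (hAφ : Aφ.IsSymm) (hLS : LS.IsSymm)
    (M : Matrix ((Fin n ⊕ Fin n) ⊕ Fin m) ((Fin n ⊕ Fin n) ⊕ Fin m) ℝ)
    (hM : M = fromBlocks (fromBlocks L' Aφ Aφ L') (fromRows AS AS)
        (fromCols ASᵀ ASᵀ) LS) :
    M.charpoly =
      (fromBlocks (L' + Aφ) (Real.sqrt 2 • AS) (Real.sqrt 2 • ASᵀ) LS).charpoly *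
        (L' - Aφ).charpoly := by
  set c : ℝ := Real.sqrt 2 / 2 with hc
  have hc2 : c * c = 1 / 2 := by
    rw [hc, div_mul_div_comm, Real.mul_self_sqrt (by norm_num)]; norm_num
  have h2c : c + c = Real.sqrt 2 := by rw [hc]; ring
  set U : Matrix (Fin n ⊕ Fin n) (Fin n ⊕ Fin n) ℝ :=
    fromBlocks (c • 1) (c • 1) (c • 1) (-(c • 1)) with hU
  set P : Matrix ((Fin n ⊕ Fin n) ⊕ Fin m) ((Fin n ⊕ Fin n) ⊕ Fin m) ℝ :=
    fromBlocks U 0 0 1 with hP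
  have hUU : U * U = 1 := by
    rw [hU, fromBlocks_multiply, ← fromBlocks_one, fromBlocks_inj]
    refine ⟨?_, ?_, ?_, ?_⟩ <;>
      simp only [Matrix.smul_mul, Matrix.mul_smul, Matrix.one_mul, Matrix.mul_one,
        Matrix.neg_mul, Matrix.mul_neg, smul_neg, neg_neg, smul_smul] <;>
      match_scalars <;>
      first
        | ring1
        | linear_combination 2 * hc2
        | linear_combination -(2 * hc2)
  have hPP : P * P = 1 := by
    rw [hP, fromBlocks_multiply, ← fromBlocks_one]
    simp [hUU]
  have hA : U * (fromBlocks L' Aφ Aφ L') * U = fromBlocks (L' + Aφ) 0 0 (L' - Aφ) := by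
    rw [hU, fromBlocks_multiply, fromBlocks_multiply, fromBlocks_inj]
    refine ⟨?_, ?_, ?_, ?_⟩ <;>
      simp only [Matrix.smul_mul, Matrix.mul_smul, Matrix.one_mul, Matrix.mul_one,
        Matrix.neg_mul, Matrix.mul_neg, smul_neg, neg_neg, smul_smul, smul_add,
        Matrix.add_mul, Matrix.mul_add] <;>
      match_scalars <;>
      first
        | ring1
        | linear_combination 2 * hc2
        | linear_combination -(2 * hc2)
  have hB : U * fromRows AS AS = fromRows (Real.sqrt 2 • AS) 0 := by
    rw [hU, fromBlocks_mul_fromRows, fromRows_ext_iff]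
    refine ⟨?_, ?_⟩ <;>
      simp only [Matrix.smul_mul, Matrix.one_mul, Matrix.neg_mul, smul_neg] <;>
      match_scalars <;>
      first
        | ring1
        | linear_combination h2c
        | linear_combination -h2c
  have hC : fromCols ASᵀ ASᵀ * U = fromCols (Real.sqrt 2 • ASᵀ) 0 := by
    rw [hU, fromCols_mul_fromBlocks, fromCols_ext_iff]
    refine ⟨?_, ?_⟩ <;>
      simp only [Matrix.mul_smul, Matrix.mul_one, Matrix.mul_neg, smul_neg] <;>
      match_scalars <;>
      first
        | ring1
        | linear_combination h2c
        | linear_combination -h2c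
  have hN : P * M * P = fromBlocks
      (fromBlocks (L' + Aφ) 0 0 (L' - Aφ))
      (fromRows (Real.sqrt 2 • AS) 0)
      (fromCols (Real.sqrt 2 • ASᵀ) 0) LS := by
    rw [hM, hP, fromBlocks_multiply, fromBlocks_multiply]
    simp only [Matrix.zero_mul, Matrix.mul_zero, Matrix.one_mul, Matrix.mul_one,
      add_zero, zero_add]
    rw [hA, hB, hC]
  have key : M.charpoly = (P * M * P).charpoly := (charpoly_conj_aux P P M hPP hPP).symm
  rw [key, hN]
  set e : ((Fin n ⊕ Fin n) ⊕ Fin m) ≃ ((Fin n ⊕ Fin m) ⊕ Fin n) :=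
    (Equiv.sumAssoc _ _ _).trans
      (((Equiv.refl (Fin n)).sumCongr (Equiv.sumComm (Fin n) (Fin m))).trans
        (Equiv.sumAssoc _ _ _).symm) with he
  have hre : reindex e e (fromBlocks
      (fromBlocks (L' + Aφ) 0 0 (L' - Aφ))
      (fromRows (Real.sqrt 2 • AS) 0)
      (fromCols (Real.sqrt 2 • ASᵀ) 0) LS) =
      fromBlocks (fromBlocks (L' + Aφ) (Real.sqrt 2 • AS) (Real.sqrt 2 • ASᵀ) LS) 0 0
        (L' - Aφ) := by
    ext (⟨i | i⟩ | i) (⟨j | j⟩ | j) <;>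
      simp [he, fromBlocks, fromRows_apply_inl, fromRows_apply_inr, fromCols, Equiv.sumAssoc, Equiv.sumComm]
  rw [← Matrix.charpoly_reindex e, hre, Matrix.charpoly_fromBlocks_zero₁₂]
end

section
/- Let M be the real symmetric block matrix M = [[L', Aφ, AS], [Aφ, L', AS], [ASᵀ, ASᵀ, LS]], and let N = [[(1/√2)Iₙ, 0], [(1/√2)Iₙ, 0], [0, Iₘ]], M̃₊ = [[L' + Aφ, √2·AS], [√2·ASᵀ, LS]]. Then for every real t, exp(itM)·N = N·exp(itM̃₊), where exp denotes the matrix exponential over the complex numbers. -/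
open Matrix Complex

lemma exp_intertwine {p q : Type*} [Fintype p] [DecidableEq p] [Fintype q] [DecidableEq q]
    (X : Matrix p p ℂ) (P : Matrix p q ℂ) (Y : Matrix q q ℂ) (h : X * P = P * Y) :
    NormedSpace.exp X * P = P * NormedSpace.exp Y := by
  have hpow : ∀ k : ℕ, X ^ k * P = P * Y ^ k := by
    intro k
    induction k with
    | zero => simp
    | succ k ih => rw [pow_succ, pow_succ, Matrix.mul_assoc, h, ← Matrix.mul_assoc, ih, Matrix.mul_assoc]
  letI : SeminormedRing (Matrix p p ℂ) := Matrix.linftyOpSemiNormedRing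
  letI : NormedRing (Matrix p p ℂ) := Matrix.linftyOpNormedRing
  letI : NormedAlgebra ℂ (Matrix p p ℂ) := Matrix.linftyOpNormedAlgebra
  letI : SeminormedRing (Matrix q q ℂ) := Matrix.linftyOpSemiNormedRing
  letI : NormedRing (Matrix q q ℂ) := Matrix.linftyOpNormedRing
  letI : NormedAlgebra ℂ (Matrix q q ℂ) := Matrix.linftyOpNormedAlgebra
  have hsum1 : Summable fun k : ℕ => ((k.factorial : ℂ))⁻¹ • X ^ k :=
    NormedSpace.expSeries_summable' (𝕂 := ℂ) X
  have hsum2 : Summable fun k : ℕ => ((k.factorial : ℂ))⁻¹ • Y ^ k :=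
    NormedSpace.expSeries_summable' (𝕂 := ℂ) Y
  let f : Matrix p p ℂ →ₗ[ℂ] Matrix p q ℂ :=
    { toFun := fun A => A * P
      map_add' := fun A B => Matrix.add_mul A B P
      map_smul' := fun c A => Matrix.smul_mul c A P }
  let g : Matrix q q ℂ →ₗ[ℂ] Matrix p q ℂ :=
    { toFun := fun B => P * B
      map_add' := fun A B => Matrix.mul_add P A B
      map_smul' := fun c A => (Matrix.mul_smul P c A) }
  have hf : Continuous f := f.continuous_of_finiteDimensional
  have hg : Continuous g := g.continuous_of_finiteDimensional
  have h1 : f (∑' k : ℕ, ((k.factorial : ℂ))⁻¹ • X ^ k)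
      = ∑' k : ℕ, f (((k.factorial : ℂ))⁻¹ • X ^ k) :=
    (hsum1.hasSum.map f.toAddMonoidHom hf).tsum_eq.symm
  have h2 : g (∑' k : ℕ, ((k.factorial : ℂ))⁻¹ • Y ^ k)
      = ∑' k : ℕ, g (((k.factorial : ℂ))⁻¹ • Y ^ k) :=
    (hsum2.hasSum.map g.toAddMonoidHom hg).tsum_eq.symm
  have hfg : NormedSpace.exp X * P = f (∑' k : ℕ, ((k.factorial : ℂ))⁻¹ • X ^ k) := by
    rw [NormedSpace.exp_eq_tsum ℂ]; rfl
  have hgf : P * NormedSpace.exp Y = g (∑' k : ℕ, ((k.factorial : ℂ))⁻¹ • Y ^ k) := by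
    rw [NormedSpace.exp_eq_tsum ℂ]; rfl
  rw [hfg, hgf, h1, h2]
  refine tsum_congr fun k => ?_
  show (((k.factorial : ℂ))⁻¹ • X ^ k) * P = P * (((k.factorial : ℂ))⁻¹ • Y ^ k)
  rw [Matrix.smul_mul, hpow, Matrix.mul_smul]

lemma myFromRows_add {R : Type*} {m₁ m₂ n : Type*} [Semiring R]
    (A C : Matrix m₁ n R) (B D : Matrix m₂ n R) :
    Matrix.fromRows A B + Matrix.fromRows C D = Matrix.fromRows (A + C) (B + D) := by
  ext i j; cases i <;> simp

lemma myFromRows_smul {R : Type*} {m₁ m₂ n : Type*} [Semiring R]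
    (c : R) (A : Matrix m₁ n R) (B : Matrix m₂ n R) :
    c • Matrix.fromRows A B = Matrix.fromRows (c • A) (c • B) := by
  ext i j; cases i <;> simp

open Complex

/-- For every real `t`, `exp(itM) · N = N · exp(itM̃₊)`, where `M` is the block
matrix `[[L', Aφ, AS], [Aφ, L', AS], [ASᵀ, ASᵀ, LS]]`,
`N = [[(1/√2)Iₙ, 0], [(1/√2)Iₙ, 0], [0, Iₘ]]` and
`M̃₊ = [[L' + Aφ, √2·AS], [√2·ASᵀ, LS]]`, all viewed over `ℂ`. -/
theorem stmt6 (n m : ℕ) (L' Aφ : Matrix (Fin n) (Fin n) ℝ)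
    (AS : Matrix (Fin n) (Fin m) ℝ) (LS : Matrix (Fin m) (Fin m) ℝ)
    (hL' : L'.IsSymm) (hAφ : Aφ.IsSymm) (hLS : LS.IsSymm)
    (M : Matrix ((Fin n ⊕ Fin n) ⊕ Fin m) ((Fin n ⊕ Fin n) ⊕ Fin m) ℝ)
    (hM : M = fromBlocks (fromBlocks L' Aφ Aφ L') (fromRows AS AS)
        (fromCols ASᵀ ASᵀ) LS)
    (N : Matrix ((Fin n ⊕ Fin n) ⊕ Fin m) (Fin n ⊕ Fin m) ℝ)
    (hN : N = fromBlocks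
        (fromRows ((Real.sqrt 2)⁻¹ • (1 : Matrix (Fin n) (Fin n) ℝ))
          ((Real.sqrt 2)⁻¹ • (1 : Matrix (Fin n) (Fin n) ℝ))) 0
        0 (1 : Matrix (Fin m) (Fin m) ℝ))
    (Mtilde : Matrix (Fin n ⊕ Fin m) (Fin n ⊕ Fin m) ℝ)
    (hMt : Mtilde = fromBlocks (L' + Aφ) (Real.sqrt 2 • AS) (Real.sqrt 2 • ASᵀ) LS)
    (t : ℝ) :
    NormedSpace.exp ((Complex.I * (t : ℂ)) • M.map (Complex.ofReal)) *
        N.map (Complex.ofReal) =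
      N.map (Complex.ofReal) *
        NormedSpace.exp ((Complex.I * (t : ℂ)) • Mtilde.map (Complex.ofReal)) := by
  have hs2 : (Real.sqrt 2) ≠ 0 := by positivity
  have hc1 : ((Real.sqrt 2)⁻¹ : ℝ) * Real.sqrt 2 = 1 := inv_mul_cancel₀ hs2
  have h22 : Real.sqrt 2 * Real.sqrt 2 = 2 := Real.mul_self_sqrt (by norm_num)
  have hc2 : ((Real.sqrt 2)⁻¹ : ℝ) + (Real.sqrt 2)⁻¹ = Real.sqrt 2 := by
    field_simp
    linarith
  have key : M * N = N * Mtilde := by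
    subst hM hN hMt
    rw [fromBlocks_multiply, fromBlocks_multiply]
    refine Matrix.ext_iff.mp fun i j => ?_
    congr 1
    · rw [fromBlocks_mul_fromRows, Matrix.mul_zero, add_zero]
      simp [Matrix.mul_smul, Matrix.smul_mul, Matrix.mul_add, smul_add, add_comm,
        myFromRows_add]
    · rw [Matrix.mul_zero, zero_add, Matrix.mul_one, fromRows_mul]
      simp [Matrix.smul_mul, smul_smul, hc1]
    · rw [fromCols_mul_fromRows, Matrix.mul_zero, add_zero, Matrix.one_mul,
        Matrix.mul_smul, Matrix.mul_one, ← add_smul, hc2]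
      simp [Matrix.zero_mul]
    · rw [Matrix.mul_zero, zero_add, Matrix.mul_one, Matrix.zero_mul, zero_add,
        Matrix.one_mul]
  have keyC : M.map Complex.ofReal * N.map Complex.ofReal
      = N.map Complex.ofReal * Mtilde.map Complex.ofReal := by
    have h1 : (M * N).map Complex.ofReal = M.map Complex.ofReal * N.map Complex.ofReal :=
      Matrix.map_mul (f := Complex.ofRealHom)
    have h2 : (N * Mtilde).map Complex.ofReal
        = N.map Complex.ofReal * Mtilde.map Complex.ofReal :=
      Matrix.map_mul (f := Complex.ofRealHom)
    rw [← h1, ← h2, key]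
  apply exp_intertwine
  rw [Matrix.smul_mul, keyC, Matrix.mul_smul]
end

section
/- Let q ≠ 0 be real and let 𝓛 be the 2×2 real symmetric matrix with diagonal entries 1 + q² and off-diagonal entries −q (the q-Laplacian of the path P₂). Then exp(i·(π/(2q))·𝓛) maps e₁ to a unimodular complex multiple of e₂; that is, the path P₂ admits perfect state transfer between its two vertices at time π/(2q) with respect to its q-Laplacian. -/
open Matrix Real

/-- The path `P₂` admits perfect state transfer between its two vertices at time
`π/(2q)` with respect to its q-Laplacian `[[1+q², −q], [−q, 1+q²]]`:
`exp(i·(π/(2q))·𝓛)` maps `e₁` to a unimodular multiple of `e₂`. -/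
theorem stmt14 (q : ℝ) (hq : q ≠ 0)
    (𝓛 : Matrix (Fin 2) (Fin 2) ℂ)
    (h𝓛 : 𝓛 = !![(1 : ℂ) + (q : ℂ) ^ 2, -(q : ℂ); -(q : ℂ), (1 : ℂ) + (q : ℂ) ^ 2]) :
    ∃ γ : ℂ, ‖γ‖ = 1 ∧
      (NormedSpace.exp ((Complex.I * ((π / (2 * q) : ℝ) : ℂ)) • 𝓛)).mulVec
          ((Pi.single 0 1 : Fin 2 → ℂ)) = γ • (Pi.single 1 1 : Fin 2 → ℂ) := by
  subst h𝓛
  have hq' : (q : ℂ) ≠ 0 := by exact_mod_cast hq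
  set t : ℂ := ((π / (2 * q) : ℝ) : ℂ) with ht
  set c : ℂ := Complex.I * t * (1 + (q : ℂ) ^ 2) with hc
  set s : ℂ := ((-(π / 2) : ℝ) : ℂ) * Complex.I with hs
  have hexp_s : Complex.exp s = -Complex.I := by
    rw [hs, Complex.exp_mul_I]
    push_cast
    simp
  have hexp_ms : Complex.exp (-s) = Complex.I := by
    rw [hs, ← neg_mul, Complex.exp_mul_I]
    push_cast
    simp
  -- the unit given by the eigenvector matrix
  have hUU : (!![1, 1; 1, -1] : Matrix (Fin 2) (Fin 2) ℂ) *
      ((2 : ℂ)⁻¹ • !![1, 1; 1, -1]) = 1 := by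
    ext i j
    fin_cases i <;> fin_cases j <;>
      simp [Matrix.mul_apply, Fin.sum_univ_two, Matrix.one_apply] <;> ring
  have hUU' : ((2 : ℂ)⁻¹ • (!![1, 1; 1, -1] : Matrix (Fin 2) (Fin 2) ℂ)) *
      !![1, 1; 1, -1] = 1 := by
    ext i j
    fin_cases i <;> fin_cases j <;>
      simp [Matrix.mul_apply, Fin.sum_univ_two, Matrix.one_apply] <;> ring
  set U : (Matrix (Fin 2) (Fin 2) ℂ)ˣ :=
    ⟨!![1, 1; 1, -1], (2 : ℂ)⁻¹ • !![1, 1; 1, -1], hUU, hUU'⟩ with hU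
  -- conjugation of a diagonal matrix by the unit
  have hconj : ∀ a b : ℂ, (U : Matrix (Fin 2) (Fin 2) ℂ) * Matrix.diagonal ![a, b] *
      ((U⁻¹ : (Matrix (Fin 2) (Fin 2) ℂ)ˣ) : Matrix (Fin 2) (Fin 2) ℂ) =
      (2 : ℂ)⁻¹ • !![a + b, a - b; a - b, a + b] := by
    intro a b
    show (!![1, 1; 1, -1] : Matrix (Fin 2) (Fin 2) ℂ) * Matrix.diagonal ![a, b] *
      ((2 : ℂ)⁻¹ • !![1, 1; 1, -1]) = _
    ext i j
    fin_cases i <;> fin_cases j <;>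
      simp [Matrix.mul_apply, Matrix.vecMul, dotProduct, Fin.sum_univ_two, Matrix.diagonal_apply] <;> ring
  -- split the exponent
  have hsplit : (Complex.I * t) •
      (!![(1 : ℂ) + (q : ℂ) ^ 2, -(q : ℂ); -(q : ℂ), (1 : ℂ) + (q : ℂ) ^ 2]) =
      c • (1 : Matrix (Fin 2) (Fin 2) ℂ) +
        (U : Matrix (Fin 2) (Fin 2) ℂ) * Matrix.diagonal ![s, -s] *
          ((U⁻¹ : (Matrix (Fin 2) (Fin 2) ℂ)ˣ) : Matrix (Fin 2) (Fin 2) ℂ) := by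
    rw [hconj]
    have hqt : Complex.I * t * (-(q : ℂ)) = s := by
      rw [ht, hs]
      push_cast
      field_simp
    ext i j
    fin_cases i <;> fin_cases j <;>
      simp [hc, Matrix.one_apply, ← hqt] <;> ring
  have hvec : ∀ a b : ℂ, NormedSpace.exp (![a, b] : Fin 2 → ℂ) =
      ![Complex.exp a, Complex.exp b] := by
    intro a b
    rw [Pi.exp_def]
    funext i
    fin_cases i <;> simp [← Complex.exp_eq_exp_ℂ]
  have hone : c • (1 : Matrix (Fin 2) (Fin 2) ℂ) = Matrix.diagonal ![c, c] := by
    ext i j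
    fin_cases i <;> fin_cases j <;> simp [Matrix.one_apply, Matrix.diagonal_apply]
  have hcomm : Commute (Matrix.diagonal ![c, c])
      ((U : Matrix (Fin 2) (Fin 2) ℂ) * Matrix.diagonal ![s, -s] *
        ((U⁻¹ : (Matrix (Fin 2) (Fin 2) ℂ)ˣ) : Matrix (Fin 2) (Fin 2) ℂ)) :=
    hone ▸ ((Commute.one_left _).smul_left c)
  rw [hsplit, hone, Matrix.exp_add_of_commute _ _ hcomm, Matrix.exp_units_conj U,
    Matrix.exp_diagonal, Matrix.exp_diagonal, hvec, hvec, hexp_s, hexp_ms, hconj]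
  refine ⟨Complex.exp c * -Complex.I, ?_, ?_⟩
  · rw [norm_mul, Complex.norm_exp]
    have hre : c.re = 0 := by
      have hcform : c = ((π / (2 * q) * (1 + q ^ 2) : ℝ) : ℂ) * Complex.I := by
        rw [hc, ht]
        push_cast
        ring
      rw [hcform]
      simp [Complex.mul_re, Complex.div_im, Complex.div_re, ← Complex.ofReal_pow]
    simp [hre]
  · ext j
    fin_cases j <;>
      simp [Matrix.mulVec, dotProduct, Fin.sum_univ_two, Matrix.mul_apply,
        Matrix.diagonal_apply, Pi.single_apply] <;> ring
end

section
/- Let G be a finite weighted graph with real symmetric matrix M (e.g., its q-Laplacian), and suppose u, v are twin vertices, meaning that the u-th and v-th rows of M agree off the positions u, v, and M_{uu} = M_{vv}, M_{uv} = M_{vu}. Then e_u − e_v is an eigenvector of M with eigenvalue M_{uu} − M_{uv}. Consequently, for all t ∈ ℝ, |(1/2)(e_u − e_v)ᵀ exp(itM)(e_u − e_v)| = 1, i.e., the pair state (1/√2)(e_u − e_v) is sharply 1-sedentary. -/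
open Matrix

lemma exp_mulVec_eigen {n : ℕ} (A : Matrix (Fin n) (Fin n) ℂ) (x : Fin n → ℂ) (c : ℂ)
    (h : A.mulVec x = c • x) :
    (NormedSpace.exp A).mulVec x = NormedSpace.exp c • x := by
  letI : SeminormedRing (Matrix (Fin n) (Fin n) ℂ) := Matrix.linftyOpSemiNormedRing
  letI : NormedRing (Matrix (Fin n) (Fin n) ℂ) := Matrix.linftyOpNormedRing
  letI : NormedAlgebra ℂ (Matrix (Fin n) (Fin n) ℂ) := Matrix.linftyOpNormedAlgebra
  have hpow : ∀ k : ℕ, (A ^ k).mulVec x = c ^ k • x := by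
    intro k
    induction k with
    | zero => simp
    | succ k ih =>
      rw [pow_succ, pow_succ, ← Matrix.mulVec_mulVec, h, Matrix.mulVec_smul, ih,
        smul_smul, mul_comm]
  let L : Matrix (Fin n) (Fin n) ℂ →ₗ[ℂ] (Fin n → ℂ) :=
    { toFun := fun B => B.mulVec x
      map_add' := fun B C => Matrix.add_mulVec B C x
      map_smul' := fun a B => Matrix.smul_mulVec a B x }
  let Lc : Matrix (Fin n) (Fin n) ℂ →L[ℂ] (Fin n → ℂ) := L.toContinuousLinearMap
  have hsum : Summable (fun k : ℕ => ((Nat.factorial k : ℂ))⁻¹ • A ^ k) :=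
    NormedSpace.expSeries_summable' A
  have hL : (NormedSpace.exp A).mulVec x = Lc (NormedSpace.exp A) := rfl
  rw [hL, NormedSpace.exp_eq_tsum ℂ, Lc.map_tsum hsum]
  have h1 : ∀ k : ℕ, Lc (((Nat.factorial k : ℂ))⁻¹ • A ^ k) = (((Nat.factorial k : ℂ))⁻¹ * c ^ k) • x := by
    intro k
    show (((Nat.factorial k : ℂ))⁻¹ • A ^ k).mulVec x = _
    rw [Matrix.smul_mulVec, hpow, smul_smul]
  simp_rw [h1]
  rw [Summable.tsum_smul_const (by simpa [smul_eq_mul] using NormedSpace.expSeries_summable' (𝕂 := ℂ) c),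
    NormedSpace.exp_eq_tsum ℂ]
  simp [smul_eq_mul]

/-- If `u, v` are twin vertices for a real symmetric matrix `M` (rows `u` and
`v` agree off `{u,v}`, `M_{uu} = M_{vv}`), then `e_u − e_v` is an eigenvector of
`M` with eigenvalue `M_{uu} − M_{uv}`, and the pair state `(1/√2)(e_u − e_v)` is
sharply 1-sedentary: `|(1/2)(e_u − e_v)ᵀ exp(itM)(e_u − e_v)| = 1` for all `t`. -/
theorem stmt17 (n : ℕ) (M : Matrix (Fin n) (Fin n) ℝ) (hM : M.IsSymm)
    (u v : Fin n) (huv : u ≠ v)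
    (htwin : ∀ w : Fin n, w ≠ u → w ≠ v → M u w = M v w)
    (hdiag : M u u = M v v)
    (e : Fin n → ℝ)
    (he : e = fun w => (if w = u then (1 : ℝ) else 0) - (if w = v then 1 else 0)) :
    M.mulVec e = (M u u - M u v) • e ∧
      ∀ t : ℝ,
        ‖((1 / 2) *
          (dotProduct (fun i => ((e i : ℝ) : ℂ))
            ((NormedSpace.exp ((Complex.I * (t : ℂ)) • M.map Complex.ofReal)).mulVec
              (fun i => ((e i : ℝ) : ℂ)))))‖ = 1 := by
  have hMij : ∀ i j : Fin n, M j i = M i j := fun i j => congrFun (congrFun hM i) j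
  have heig : M.mulVec e = (M u u - M u v) • e := by
    funext w
    simp only [Matrix.mulVec, dotProduct, he, Pi.smul_apply, smul_eq_mul]
    rw [Finset.sum_congr rfl (fun i _ => mul_sub (M w i) _ _), Finset.sum_sub_distrib]
    simp only [mul_ite, mul_one, mul_zero, Finset.sum_ite_eq', Finset.mem_univ, if_true]
    by_cases hwu : w = u
    · simp [hwu, huv, Ne.symm huv]
    · by_cases hwv : w = v
      · subst hwv
        simp only [hwu, if_neg hwu, if_pos rfl, if_neg (Ne.symm huv)]
        rw [hMij u w, ← hdiag]
        norm_num
      · simp only [hwu, hwv, if_neg hwu, if_neg hwv]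
        have h1 : M w u = M w v := by
          rw [← hMij w u] at *
          rw [← hMij w v]
          exact htwin w hwu hwv
        rw [h1]; ring
  refine ⟨heig, fun t => ?_⟩
  set lam : ℝ := M u u - M u v with hlam
  set ec : Fin n → ℂ := fun i => ((e i : ℝ) : ℂ) with hec
  have hmapeig : (M.map Complex.ofReal).mulVec ec = (lam : ℂ) • ec := by
    have h2 : (M.map Complex.ofReal).mulVec ec = fun i => ((M.mulVec e i : ℝ) : ℂ) := by
      funext i
      simp [Matrix.mulVec, dotProduct, hec]
    rw [h2, heig]
    funext i
    simp [hec]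
  have hAeig : ((Complex.I * (t : ℂ)) • M.map Complex.ofReal).mulVec ec =
      ((Complex.I * (t : ℂ)) * lam) • ec := by
    rw [Matrix.smul_mulVec, hmapeig, smul_smul]
  have hexp := exp_mulVec_eigen _ ec _ hAeig
  rw [hexp, dotProduct_smul]
  have hre : (∑ i, e i * e i) = 2 := by
    simp only [he, sub_mul, mul_sub, ite_mul, mul_ite, one_mul, mul_one, zero_mul, mul_zero,
      Finset.sum_sub_distrib, Finset.sum_ite_eq', Finset.mem_univ, if_true,
      if_neg huv, if_neg (Ne.symm huv)]
    ring
  have hdot : dotProduct ec ec = 2 := by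
    have : dotProduct ec ec = ((∑ i, e i * e i : ℝ) : ℂ) := by
      simp only [dotProduct, hec]
      push_cast
      rfl
    rw [this, hre]
    norm_num
  rw [hdot, smul_eq_mul, ← Complex.exp_eq_exp_ℂ]
  rw [norm_mul, norm_mul, Complex.norm_exp]
  norm_num [Complex.mul_re, Complex.mul_im]
end
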